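/- arXiv:2402.06821 — 8 statements merged into one kernel-verified Lean document; each statement's English description precedes it below -/
import Mathlib

section
/- Completeness of the main reduction (Claim 1 in the proof of Theorem 4.6): Let B be a finite σ-structure, k, L ≥ 1, ρ_1, …, ρ_L : B → [k] × [k] arbitrary mappings, G a finite simple graph, and let X = X(B, (ρ_i)_{i=1}^L, G, k) be the structure from the main construction. If G contains a clique of size k, then there exists a homomorphism from B to X. -/
/-- A relational structure over signature `σ` with arities `ar` and universe `A`. -/
structure RelStruct (σ : Type) (ar : σ → ℕ) (A : Type) where
  rel : ∀ R : σ, Set (Fin (ar R) → A)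

/-- `f` is a homomorphism of relational structures from `SA` to `SB`. -/
def IsHom {σ : Type} {ar : σ → ℕ} {A B : Type}
    (SA : RelStruct σ ar A) (SB : RelStruct σ ar B) (f : A → B) : Prop :=
  ∀ (R : σ) (t : Fin (ar R) → A), t ∈ SA.rel R → (fun j => f (t j)) ∈ SB.rel R

/-- The Gaifman (primal) graph of a relational structure. -/
def Gaifman {σ : Type} {ar : σ → ℕ} {A : Type} (SA : RelStruct σ ar A) : SimpleGraph A where
  Adj a b := a ≠ b ∧ ∃ (R : σ) (t : Fin (ar R) → A),
      t ∈ SA.rel R ∧ a ∈ Set.range t ∧ b ∈ Set.range t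
  symm := by
    constructor
    rintro a b ⟨hab, R, t, ht, ha, hb⟩
    exact ⟨hab.symm, R, t, ht, hb, ha⟩
  loopless := by
    constructor
    rintro a ⟨ha, -⟩
    exact ha rfl

/-- `ρ` is a grid-like mapping from the vertex set of the graph `G` onto `[k] × [k]`:
it is surjective and all the preimages of its two components are connected in `G`. -/
def GridLikeOn {C : Type} (G : SimpleGraph C) (k : ℕ) (ρ : C → Fin k × Fin k) : Prop :=
  Function.Surjective ρ ∧ ∀ i : Fin k,
    (G.induce {c | (ρ c).1 = i}).Connected ∧
    (G.induce {c | (ρ c).2 = i}).Connected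

/-- `ρ` is a grid-like mapping from the structure `SC` onto `[k] × [k]`. -/
def GridLike {σ : Type} {ar : σ → ℕ} {C : Type}
    (SC : RelStruct σ ar C) (k : ℕ) (ρ : C → Fin k × Fin k) : Prop :=
  GridLikeOn (Gaifman SC) k ρ

/-- `G` contains a clique of size `k`. -/
def HasNClique {V : Type} (G : SimpleGraph V) (k : ℕ) : Prop :=
  ∃ s : Finset V, G.IsNClique k s

/-- The condition defining the universe of the structure `X` of the main construction. -/
def XOk {B V : Type} (k L : ℕ) (ρ : Fin L → B → Fin k × Fin k) (G : SimpleGraph V)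
    (x : B × (Fin L → V × V)) : Prop :=
  ∀ i : Fin L,
    ((ρ i x.1).1 = (ρ i x.1).2 → (x.2 i).1 = (x.2 i).2) ∧
    ((ρ i x.1).1 ≠ (ρ i x.1).2 → G.Adj (x.2 i).1 (x.2 i).2)

/-- The structure `X = X(B, (ρ_i)_{i=1}^L, G, k)` of the main construction. -/
def XStruct {σ : Type} {ar : σ → ℕ} {B V : Type} (SB : RelStruct σ ar B) (k L : ℕ)
    (ρ : Fin L → B → Fin k × Fin k) (G : SimpleGraph V) :
    RelStruct σ ar {x : B × (Fin L → V × V) // XOk k L ρ G x} where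
  rel R := {t |
    (fun j => (t j).1.1) ∈ SB.rel R ∧
    ∀ (j j' : Fin (ar R)) (i : Fin L),
      ((ρ i (t j).1.1).1 = (ρ i (t j').1.1).1 → ((t j).1.2 i).1 = ((t j').1.2 i).1) ∧
      ((ρ i (t j).1.1).2 = (ρ i (t j').1.1).2 → ((t j).1.2 i).2 = ((t j').1.2 i).2)}

/-- Completeness of the main reduction (Claim 1 in the proof of Theorem 4.6).
If `G` contains a clique of size `k`, then there is a homomorphism from `B` to
`X = X(B, (ρ_i)_{i=1}^L, G, k)`. -/
theorem completeness_of_main_reduction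
    {σ : Type} {ar : σ → ℕ} {B V : Type} [Finite σ] [Finite B] [Finite V]
    (SB : RelStruct σ ar B) (k L : ℕ) (hk : 1 ≤ k) (hL : 1 ≤ L)
    (ρ : Fin L → B → Fin k × Fin k) (G : SimpleGraph V)
    (hclique : HasNClique G k) :
    ∃ f : B → {x : B × (Fin L → V × V) // XOk k L ρ G x},
      IsHom SB (XStruct SB k L ρ G) f := by
  obtain ⟨s, hs⟩ := hclique
  have hcard : s.card = k := hs.card_eq
  set g : Fin k → V := fun i => (s.equivFin.symm (Fin.cast hcard.symm i) : V) with hg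
  have hmem : ∀ i, g i ∈ s := fun i => (s.equivFin.symm (Fin.cast hcard.symm i)).2
  have hginj : Function.Injective g := by
    intro a b hab
    have := Subtype.ext hab
    simpa using congrArg (fun x => (Fin.cast hcard x : Fin k)) (s.equivFin.symm.injective this)
  have hadj : ∀ {a b : Fin k}, a ≠ b → G.Adj (g a) (g b) := by
    intro a b hab
    exact hs.1 (hmem a) (hmem b) (fun h => hab (hginj h))
  refine ⟨fun b => ⟨⟨b, fun i => (g (ρ i b).1, g (ρ i b).2)⟩, ?_⟩, ?_⟩
  · intro i
    constructor
    · intro h; simp [h]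
    · intro h; exact hadj h
  · intro R t ht
    refine ⟨ht, ?_⟩
    intro j j' i
    constructor
    · intro h; simp only; rw [h]
    · intro h; simp only; rw [h]
end

section
/- Soundness of the main reduction (from the proof of Theorem 4.6): Let B be a finite σ-structure, k, L ≥ 1, ρ_1, …, ρ_L : B → [k] × [k], G a finite simple graph, and X = X(B, (ρ_i)_{i=1}^L, G, k) the structure from the main construction. Let A be a finite σ-structure and α : A → X a homomorphism. Suppose there exist a finite σ-structure C, a homomorphism h : C → A, and l ∈ [L] such that ρ_l ∘ Π ∘ α ∘ h is a grid-like mapping from C onto [k] × [k]. Then G contains a clique of size k. -/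
lemma const_on_connected {C V : Type} (G : SimpleGraph C) (S : Set C)
    (hconn : (G.induce S).Connected) (f : C → V)
    (hf : ∀ a b : S, G.Adj a b → f a = f b) :
    ∀ a b : S, f (a : C) = f (b : C) := by
  intro a b
  obtain ⟨w⟩ := hconn a b
  induction w with
  | nil => rfl
  | cons hadj _ ih => exact (hf _ _ hadj).trans ih

lemma clique_core {C V : Type} (GC : SimpleGraph C) (k : ℕ) (G : SimpleGraph V)
    (β : C → Fin k × Fin k) (u v : C → V)
    (hgrid : GridLikeOn GC k β)
    (hedge : ∀ c c' : C, GC.Adj c c' →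
      ((β c).1 = (β c').1 → u c = u c') ∧ ((β c).2 = (β c').2 → v c = v c'))
    (heq : ∀ c, (β c).1 = (β c).2 → u c = v c)
    (hadj : ∀ c, (β c).1 ≠ (β c).2 → G.Adj (u c) (v c)) :
    HasNClique G k := by
  classical
  have hu : ∀ a b : C, (β a).1 = (β b).1 → u a = u b := by
    intro a b hab
    exact const_on_connected GC {c | (β c).1 = (β a).1} (hgrid.2 (β a).1).1 u
      (fun x y hxy => (hedge x y hxy).1 (by rw [x.2, y.2])) ⟨a, rfl⟩ ⟨b, hab.symm⟩
  have hv : ∀ a b : C, (β a).2 = (β b).2 → v a = v b := by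
    intro a b hab
    exact const_on_connected GC {c | (β c).2 = (β a).2} (hgrid.2 (β a).2).2 v
      (fun x y hxy => (hedge x y hxy).2 (by rw [x.2, y.2])) ⟨a, rfl⟩ ⟨b, hab.symm⟩
  obtain ⟨w, hw⟩ := hgrid.1.hasRightInverse
  set U : Fin k → V := fun i => u (w (i, i)) with hU
  have key : ∀ i j : Fin k, i ≠ j → G.Adj (U i) (U j) := by
    intro i j hij
    have hc := hadj (w (i, j)) (by rw [hw]; simpa using hij)
    have h1 : u (w (i, j)) = U i := hu _ _ (by rw [hw, hw])
    have h2 : v (w (i, j)) = v (w (j, j)) := hv _ _ (by rw [hw, hw])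
    have h3 : u (w (j, j)) = v (w (j, j)) := heq _ (by rw [hw])
    rw [h1, h2, ← h3] at hc
    exact hc
  have hinj : Function.Injective U := by
    intro i j hEq
    by_contra hne
    exact (key i j hne).ne hEq
  refine ⟨Finset.univ.image U, ?_, ?_⟩
  · intro a ha b hb hab
    obtain ⟨i, -, rfl⟩ := Finset.mem_image.1 ha
    obtain ⟨j, -, rfl⟩ := Finset.mem_image.1 hb
    exact key i j (fun hij => hab (by rw [hij]))
  · rw [Finset.card_image_of_injective _ hinj, Finset.card_univ, Fintype.card_fin]

/-- Soundness of the main reduction (from the proof of Theorem 4.6).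
If `α : A → X` is a homomorphism and there are a finite structure `C`, a homomorphism
`h : C → A`, and `l ∈ [L]` such that `ρ_l ∘ Π ∘ α ∘ h` is a grid-like mapping from `C`
onto `[k] × [k]`, then `G` contains a clique of size `k`. -/
theorem soundness_of_main_reduction
    {σ : Type} {ar : σ → ℕ} {A B C V : Type}
    [Finite σ] [Finite A] [Finite B] [Finite C] [Finite V]
    (SB : RelStruct σ ar B) (k L : ℕ) (hk : 1 ≤ k) (hL : 1 ≤ L)
    (ρ : Fin L → B → Fin k × Fin k) (G : SimpleGraph V)
    (SA : RelStruct σ ar A)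
    (α : A → {x : B × (Fin L → V × V) // XOk k L ρ G x})
    (hα : IsHom SA (XStruct SB k L ρ G) α)
    (SC : RelStruct σ ar C) (h : C → A) (hh : IsHom SC SA h)
    (l : Fin L)
    (hgrid : GridLike SC k (fun c => ρ l ((α (h c)).1.1))) :
    HasNClique G k := by
  refine clique_core (Gaifman SC) k G (fun c => ρ l ((α (h c)).1.1))
    (fun c => ((α (h c)).1.2 l).1) (fun c => ((α (h c)).1.2 l).2) hgrid ?_ ?_ ?_
  · rintro c c' ⟨-, R, t, ht, ⟨j, rfl⟩, ⟨j', rfl⟩⟩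
    exact (hα R (fun jj => h (t jj)) (hh R t ht)).2 j j' l
  · exact fun c hc => ((α (h c)).2 l).1 hc
  · exact fun c hc => ((α (h c)).2 l).2 hc
end

section
/- Clique extraction from a grid-like mapping (final step of the proof of Theorem 4.6): Let C be a finite σ-structure, G a finite simple graph, k ≥ 1, and ξ : C → [k] × [k] a grid-like mapping from C onto [k] × [k] with components ξ = (ξ¹, ξ²). Suppose u, v : C → V(G) are functions such that: (i) for every c ∈ C, if ξ¹(c) = ξ²(c) then u(c) = v(c), and if ξ¹(c) ≠ ξ²(c) then {u(c), v(c)} is an edge of G; (ii) for every edge {c, c'} of the Gaifman graph of C, if ξ¹(c) = ξ¹(c') then u(c) = u(c'), and if ξ²(c) = ξ²(c') then v(c) = v(c'). Then G contains a clique of size k. -/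
private lemma const_of_connected {A β : Type} {G : SimpleGraph A} (h : G.Connected)
    (f : A → β) (hf : ∀ a b, G.Adj a b → f a = f b) : ∀ a b, f a = f b := by
  intro a b
  obtain ⟨w⟩ := h.preconnected a b
  induction w with
  | nil => rfl
  | cons hadj p ih => exact (hf _ _ hadj).trans ih

/-- Clique extraction from a grid-like mapping (final step of the proof of
Theorem 4.6). -/
theorem clique_from_gridlike
    {σ : Type} {ar : σ → ℕ} {C V : Type} [Finite σ] [Finite C] [Finite V]
    (SC : RelStruct σ ar C) (G : SimpleGraph V) (k : ℕ) (hk : 1 ≤ k)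
    (ξ : C → Fin k × Fin k) (hξ : GridLike SC k ξ)
    (u v : C → V)
    (h1 : ∀ c : C, ((ξ c).1 = (ξ c).2 → u c = v c) ∧
      ((ξ c).1 ≠ (ξ c).2 → G.Adj (u c) (v c)))
    (h2 : ∀ c c' : C, (Gaifman SC).Adj c c' →
      ((ξ c).1 = (ξ c').1 → u c = u c') ∧ ((ξ c).2 = (ξ c').2 → v c = v c')) :
    HasNClique G k := by
  classical
  -- u is constant on rows
  have hrow : ∀ a b : C, (ξ a).1 = (ξ b).1 → u a = u b := by
    intro a b hab
    set i := (ξ b).1 with hi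
    have hc := ((hξ.2 i).1)
    have := const_of_connected hc (fun x : {c | (ξ c).1 = i} => u x)
      (fun x y hxy => ((h2 x y hxy).1 (x.2.trans y.2.symm)) )
      ⟨a, hab⟩ ⟨b, rfl⟩
    exact this
  have hcol : ∀ a b : C, (ξ a).2 = (ξ b).2 → v a = v b := by
    intro a b hab
    set i := (ξ b).2 with hi
    have hc := ((hξ.2 i).2)
    have := const_of_connected hc (fun x : {c | (ξ c).2 = i} => v x)
      (fun x y hxy => ((h2 x y hxy).2 (x.2.trans y.2.symm)) )
      ⟨a, hab⟩ ⟨b, rfl⟩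
    exact this
  -- diagonal representatives
  have hsurj := hξ.1
  choose d hd using hsurj
  set w := fun i : Fin k => u (d (i, i)) with hw
  have hadj : ∀ i j : Fin k, i ≠ j → G.Adj (w i) (w j) := by
    intro i j hij
    set c := d (i, j) with hcdef
    have hc : ξ c = (i, j) := hd (i, j)
    have h1c : (ξ c).1 = i := by rw [hc]
    have h2c : (ξ c).2 = j := by rw [hc]
    have hui : u c = w i := hrow c (d (i, i)) (by rw [h1c, hd])
    have hvj : v c = v (d (j, j)) := hcol c (d (j, j)) (by rw [h2c, hd])
    have hdj : u (d (j, j)) = v (d (j, j)) := (h1 (d (j, j))).1 (by rw [hd (j, j)])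
    have hne : (ξ c).1 ≠ (ξ c).2 := by rw [h1c, h2c]; exact hij
    have := (h1 c).2 hne
    rw [hui, hvj, ← hdj] at this
    exact this
  have hinj : Function.Injective w := by
    intro i j h
    by_contra hne
    exact (hadj i j hne).ne h
  have : Fintype V := Fintype.ofFinite V
  refine ⟨Finset.image w Finset.univ, ?_, ?_⟩
  · intro x hx y hy hxy
    simp only [Finset.coe_image, Set.mem_image] at hx hy
    obtain ⟨i, -, rfl⟩ := hx
    obtain ⟨j, -, rfl⟩ := hy
    exact hadj i j (fun h => hxy (by rw [h]))
  · rw [Finset.card_image_of_injective _ hinj, Finset.card_univ, Fintype.card_fin]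
end

section
/- Lemma 3.1 (Grohe's completeness lemma): Let k ≥ 2, K = k(k−1)/2, let A be a connected finite σ-structure, μ a minor map from the (k × K)-grid onto A, G a finite simple graph, and M = M(A, μ, G) the structure from Grohe's construction. If G contains a clique of size k, then there is a homomorphism from A to M. -/
/-- The `(k × l)`-grid graph: vertices `[k] × [l]`, with `(i,j)` and `(i',j')`
adjacent iff `|i - i'| + |j - j'| = 1`. -/
def gridGraph (k l : ℕ) : SimpleGraph (Fin k × Fin l) where
  Adj p q := ((p.1 : ℤ) - (q.1 : ℤ)).natAbs + ((p.2 : ℤ) - (q.2 : ℤ)).natAbs = 1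
  symm := by
    constructor
    intro p q h
    omega
  loopless := by
    constructor
    intro p h
    simp at h

/-- `μ` is a minor map from the graph `GH` to the graph `GG`. -/
def IsMinorMap {H G : Type} (GH : SimpleGraph H) (GG : SimpleGraph G) (μ : H → Set G) : Prop :=
  (∀ v, (μ v).Nonempty ∧ (GG.induce (μ v)).Connected) ∧
  (∀ v w, v ≠ w → Disjoint (μ v) (μ w)) ∧
  (∀ v w, GH.Adj v w → ∃ v' ∈ μ v, ∃ w' ∈ μ w, GG.Adj v' w')

/-- The universe of the structure `M = M(A, μ, G)` of Grohe's construction: tuples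
`(v, e, i, p, a)` with `v` a vertex of `G`, `e` an edge of `G`, `i ∈ [k]`, `p ∈ [K]`,
`v ∈ e ↔ i ∈ ρ₂(p)`, and `a ∈ μ(i, p)`. -/
structure MElem {V A : Type} (G : SimpleGraph V) (k K : ℕ)
    (ρ₂ : Fin K ≃ {s : Finset (Fin k) // s.card = 2}) (μ : Fin k × Fin K → Set A) where
  v : V
  e : Sym2 V
  i : Fin k
  p : Fin K
  a : A
  he : e ∈ G.edgeSet
  hvi : v ∈ e ↔ i ∈ (ρ₂ p).1
  ha : a ∈ μ (i, p)

/-- The structure `M = M(A, μ, G)` of Grohe's construction. -/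
def MStruct {σ : Type} {ar : σ → ℕ} {V A : Type} (SA : RelStruct σ ar A)
    (G : SimpleGraph V) (k K : ℕ)
    (ρ₂ : Fin K ≃ {s : Finset (Fin k) // s.card = 2})
    (μ : Fin k × Fin K → Set A) :
    RelStruct σ ar (MElem G k K ρ₂ μ) where
  rel R := {t |
    (fun j => (t j).a) ∈ SA.rel R ∧
    ∀ j j' : Fin (ar R),
      ((t j).i = (t j').i → (t j).v = (t j').v) ∧
      ((t j).p = (t j').p → (t j).e = (t j').e)}

/-- Lemma 3.1 (Grohe's completeness lemma). If `G` contains a clique of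
size `k`, then there is a homomorphism from `A` to `M = M(A, μ, G)`. -/
theorem grohe_completeness
    {σ : Type} {ar : σ → ℕ} {A V : Type} [Finite σ] [Finite A] [Finite V]
    (SA : RelStruct σ ar A) (G : SimpleGraph V)
    (k K : ℕ) (hk : 2 ≤ k) (hK : K = k * (k - 1) / 2)
    (ρ₂ : Fin K ≃ {s : Finset (Fin k) // s.card = 2})
    (hconn : (Gaifman SA).Connected)
    (μ : Fin k × Fin K → Set A)
    (hμ : IsMinorMap (gridGraph k K) (Gaifman SA) μ)
    (honto : ∀ a : A, ∃ ip : Fin k × Fin K, a ∈ μ ip)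
    (hclique : HasNClique G k) :
    ∃ f : A → MElem G k K ρ₂ μ, IsHom SA (MStruct SA G k K ρ₂ μ) f := by
  obtain ⟨s, hs⟩ := hclique
  have hcard : s.card = k := hs.card_eq
  set c : Fin k → V := fun i => ((s.equivFin.symm (Fin.cast hcard.symm i)) : V) with hc
  have hcmem : ∀ i, c i ∈ s := fun i => (s.equivFin.symm _).2
  have hcinj : Function.Injective c := by
    intro i j h
    have h2 : s.equivFin.symm (Fin.cast hcard.symm i)
        = s.equivFin.symm (Fin.cast hcard.symm j) := Subtype.ext h
    have h3 := s.equivFin.symm.injective h2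
    have := congrArg Fin.val h3
    exact Fin.ext this
  have hadj : ∀ i j : Fin k, i ≠ j → G.Adj (c i) (c j) := by
    intro i j hij
    exact hs.isClique (hcmem i) (hcmem j) (fun h => hij (hcinj h))
  have hpair : ∀ p : Fin K, ∃ x y : Fin k, x ≠ y ∧ (ρ₂ p).1 = {x, y} :=
    fun p => Finset.card_eq_two.mp (ρ₂ p).2
  choose x y hne hset using hpair
  set ed : Fin K → Sym2 V := fun p => s(c (x p), c (y p)) with hed
  have hedmem : ∀ p, ed p ∈ G.edgeSet := by
    intro p
    exact hadj _ _ (hne p)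
  have hvi : ∀ (i : Fin k) (p : Fin K), (c i ∈ ed p ↔ i ∈ (ρ₂ p).1) := by
    intro i p
    rw [hset p]
    simp only [hed, Sym2.mem_iff, Finset.mem_insert, Finset.mem_singleton]
    constructor
    · rintro (h | h)
      · exact Or.inl (hcinj h)
      · exact Or.inr (hcinj h)
    · rintro (h | h)
      · exact Or.inl (congrArg c h)
      · exact Or.inr (congrArg c h)
  refine ⟨fun a => ⟨c (honto a).choose.1, ed (honto a).choose.2,
      (honto a).choose.1, (honto a).choose.2, a,
      hedmem _, hvi _ _, (honto a).choose_spec⟩, ?_⟩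
  intro R t ht
  refine ⟨ht, ?_⟩
  intro j j'
  constructor
  · intro h
    exact congrArg c h
  · intro h
    exact congrArg ed h
end

section
/- Lemma 3.2 (Grohe's soundness lemma): Let k ≥ 2, K = k(k−1)/2, let A be a connected finite σ-structure that is a core, μ a minor map from the (k × K)-grid onto A, G a finite simple graph, and M = M(A, μ, G) the structure from Grohe's construction. If there is a homomorphism from A to M, then G contains a clique of size k. -/
/-- A substructure of the structure `SA`: a subset of the universe together with
subsets of the relations all of whose tuples lie in the subset. -/
structure Substruct {σ : Type} {ar : σ → ℕ} {A : Type} (SA : RelStruct σ ar A) where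
  carrier : Set A
  rel : ∀ R : σ, Set (Fin (ar R) → A)
  rel_sub : ∀ R : σ, rel R ⊆ SA.rel R
  mem_carrier : ∀ R : σ, ∀ t ∈ rel R, ∀ j, t j ∈ carrier

/-- A substructure is proper if it differs from the whole structure. -/
def Substruct.Proper {σ : Type} {ar : σ → ℕ} {A : Type} {SA : RelStruct σ ar A}
    (S : Substruct SA) : Prop :=
  S.carrier ≠ Set.univ ∨ ∃ R : σ, S.rel R ≠ SA.rel R

/-- `f` is a homomorphism from `SA` to the substructure `S` of `SA`. -/
def IsHomToSub {σ : Type} {ar : σ → ℕ} {A : Type} {SA : RelStruct σ ar A}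
    (S : Substruct SA) (f : A → A) : Prop :=
  (∀ a, f a ∈ S.carrier) ∧ ∀ (R : σ) (t : Fin (ar R) → A),
    t ∈ SA.rel R → (fun j => f (t j)) ∈ S.rel R

/-- A structure is a core if it admits no homomorphism to a proper substructure of itself. -/
def IsCore {σ : Type} {ar : σ → ℕ} {A : Type} (SA : RelStruct σ ar A) : Prop :=
  ∀ S : Substruct SA, (∃ f, IsHomToSub S f) → ¬ S.Proper

private lemma const_of_walk' {A X : Type} {GG : SimpleGraph A} {S : Set A} {f : A → X}
    (hf : ∀ a ∈ S, ∀ b ∈ S, GG.Adj a b → f a = f b) :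
    ∀ {u v : S}, (GG.induce S).Walk u v → f u.1 = f v.1 := by
  intro u v w
  induction w with
  | nil => rfl
  | @cons x y z h p ih => exact (hf x.1 x.2 y.1 y.2 h).trans ih

private lemma const_on' {A X : Type} {GG : SimpleGraph A} {S : Set A} {f : A → X}
    (hS : (GG.induce S).Connected)
    (hf : ∀ a ∈ S, ∀ b ∈ S, GG.Adj a b → f a = f b) :
    ∀ a ∈ S, ∀ b ∈ S, f a = f b := by
  intro a ha b hb
  obtain ⟨w⟩ := hS.preconnected ⟨a, ha⟩ ⟨b, hb⟩
  exact const_of_walk' hf w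

/-- Lemma 3.2 (Grohe's soundness lemma). If `A` is a connected core and
there is a homomorphism from `A` to `M = M(A, μ, G)`, then `G` contains a clique of
size `k`. -/
theorem grohe_soundness
    {σ : Type} {ar : σ → ℕ} {A V : Type} [Finite σ] [Finite A] [Finite V]
    (SA : RelStruct σ ar A) (G : SimpleGraph V)
    (k K : ℕ) (hk : 2 ≤ k) (hK : K = k * (k - 1) / 2)
    (ρ₂ : Fin K ≃ {s : Finset (Fin k) // s.card = 2})
    (hconn : (Gaifman SA).Connected)
    (hcore : IsCore SA)
    (μ : Fin k × Fin K → Set A)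
    (hμ : IsMinorMap (gridGraph k K) (Gaifman SA) μ)
    (honto : ∀ a : A, ∃ ip : Fin k × Fin K, a ∈ μ ip)
    (hhom : ∃ f : A → MElem G k K ρ₂ μ, IsHom SA (MStruct SA G k K ρ₂ μ) f) :
    HasNClique G k := by
  classical
  obtain ⟨h, hh⟩ := hhom
  set g : A → A := fun a => (h a).a with hgdef
  have hgend : ∀ (R : σ) (t : Fin (ar R) → A), t ∈ SA.rel R →
      (fun j => g (t j)) ∈ SA.rel R := fun R t ht => (hh R t ht).1
  let S : Substruct SA :=
    { carrier := Set.range g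
      rel := fun R => {t | ∃ t0 ∈ SA.rel R, t = fun j => g (t0 j)}
      rel_sub := by rintro R t ⟨t0, ht0, rfl⟩; exact hgend R t0 ht0
      mem_carrier := by rintro R t ⟨t0, ht0, rfl⟩ j; exact ⟨t0 j, rfl⟩ }
  have hnp : ¬ S.Proper := hcore S ⟨g, fun a => ⟨a, rfl⟩, fun R t ht => ⟨t, ht, rfl⟩⟩
  simp only [Substruct.Proper, not_or, not_ne_iff, not_exists] at hnp
  obtain ⟨hcar, hrel⟩ := hnp
  have hgsurj : Function.Surjective g := by
    intro a
    have : a ∈ Set.range g := by show a ∈ S.carrier; rw [hcar]; trivial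
    exact this
  have hginj : Function.Injective g := Finite.injective_iff_surjective.mpr hgsurj
  let e : A ≃ A := Equiv.ofBijective g ⟨hginj, hgsurj⟩
  set h' : A → MElem G k K ρ₂ μ := fun a => h (e.symm a) with hh'def
  have hproj : ∀ a, (h' a).a = a := fun a => e.apply_symm_apply a
  have hhom' : IsHom SA (MStruct SA G k K ρ₂ μ) h' := by
    intro R t ht
    have htS : t ∈ {t | ∃ t0 ∈ SA.rel R, t = fun j => g (t0 j)} := by
      show t ∈ S.rel R; rw [hrel R]; exact ht
    obtain ⟨t0, ht0, rfl⟩ := htS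
    have key : (fun j => e.symm ((fun j => g (t0 j)) j)) = t0 :=
      funext fun j => e.symm_apply_apply (t0 j)
    have ht' : (fun j => e.symm ((fun j => g (t0 j)) j)) ∈ SA.rel R := by
      rw [key]; exact ht0
    exact hh R _ ht'
  -- basic numerics
  have hk0 : 0 < k := by omega
  have hK0 : 0 < K := by
    have h2 : 2 * 1 ≤ k * (k - 1) := Nat.mul_le_mul hk (by omega)
    omega
  -- membership facts
  have hmem : ∀ a, a ∈ μ ((h' a).i, (h' a).p) := by
    intro a
    have := (h' a).ha
    rwa [hproj a] at this
  have hdet : ∀ (a : A) (ip : Fin k × Fin K), a ∈ μ ip → ((h' a).i, (h' a).p) = ip := by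
    intro a ip hip
    by_contra hne
    exact (Set.disjoint_left.mp (hμ.2.1 _ _ hne) (hmem a)) hip
  have hadj : ∀ a b, (Gaifman SA).Adj a b →
      (((h' a).i = (h' b).i → (h' a).v = (h' b).v) ∧
       ((h' a).p = (h' b).p → (h' a).e = (h' b).e)) := by
    intro a b hab
    obtain ⟨-, R, t, ht, ⟨j, hj⟩, ⟨j', hj'⟩⟩ := hab
    have h2 := (hhom' R t ht).2 j j'
    simp only at h2
    rw [hj, hj'] at h2
    exact h2
  have hne' : ∀ ip, (μ ip).Nonempty := fun ip => (hμ.1 ip).1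
  let rep : Fin k × Fin K → A := fun ip => (hne' ip).some
  have hrep : ∀ ip, rep ip ∈ μ ip := fun ip => (hne' ip).some_mem
  -- constancy on a single branch set
  have celli : ∀ (ip : Fin k × Fin K), ∀ x ∈ μ ip, ∀ y ∈ μ ip,
      (h' x).i = (h' y).i ∧ (h' x).p = (h' y).p := by
    intro ip x hx y hy
    have hxy : ((h' x).i, (h' x).p) = ((h' y).i, (h' y).p) :=
      (hdet x ip hx).trans (hdet y ip hy).symm
    exact ⟨congrArg Prod.fst hxy, congrArg Prod.snd hxy⟩
  have cellv : ∀ (ip : Fin k × Fin K), ∀ a ∈ μ ip, (h' a).v = (h' (rep ip)).v := by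
    intro ip a ha
    refine const_on' (f := fun a => (h' a).v) (hμ.1 ip).2 ?_ a ha (rep ip) (hrep ip)
    intro x hx y hy hxy
    exact (hadj x y hxy).1 (celli ip x hx y hy).1
  have celle : ∀ (ip : Fin k × Fin K), ∀ a ∈ μ ip, (h' a).e = (h' (rep ip)).e := by
    intro ip a ha
    refine const_on' (f := fun a => (h' a).e) (hμ.1 ip).2 ?_ a ha (rep ip) (hrep ip)
    intro x hx y hy hxy
    exact (hadj x y hxy).2 (celli ip x hx y hy).2
  -- row steps
  have rowstep : ∀ (i : Fin k) (p q : Fin K), (p : ℕ) + 1 = (q : ℕ) →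
      (h' (rep (i, p))).v = (h' (rep (i, q))).v := by
    intro i p q hpq
    have hadjgrid : (gridGraph k K).Adj (i, p) (i, q) := by
      show ((i : ℤ) - (i : ℤ)).natAbs + ((p : ℤ) - (q : ℤ)).natAbs = 1
      omega
    obtain ⟨x, hx, y, hy, hxy⟩ := hμ.2.2 _ _ hadjgrid
    have hix : (h' x).i = i := congrArg Prod.fst (hdet x _ hx)
    have hiy : (h' y).i = i := congrArg Prod.fst (hdet y _ hy)
    have hv := (hadj x y hxy).1 (hix.trans hiy.symm)
    exact (cellv (i, p) x hx).symm.trans (hv.trans (cellv (i, q) y hy))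
  have colstep : ∀ (p : Fin K) (i j : Fin k), (i : ℕ) + 1 = (j : ℕ) →
      (h' (rep (i, p))).e = (h' (rep (j, p))).e := by
    intro p i j hij
    have hadjgrid : (gridGraph k K).Adj (i, p) (j, p) := by
      show ((i : ℤ) - (j : ℤ)).natAbs + ((p : ℤ) - (p : ℤ)).natAbs = 1
      omega
    obtain ⟨x, hx, y, hy, hxy⟩ := hμ.2.2 _ _ hadjgrid
    have hpx : (h' x).p = p := congrArg Prod.snd (hdet x _ hx)
    have hpy : (h' y).p = p := congrArg Prod.snd (hdet y _ hy)
    have hv := (hadj x y hxy).2 (hpx.trans hpy.symm)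
    exact (celle (i, p) x hx).symm.trans (hv.trans (celle (j, p) y hy))
  -- constancy along rows and columns
  have rowv0 : ∀ (i : Fin k) (n : ℕ) (hn : n < K),
      (h' (rep (i, ⟨n, hn⟩))).v = (h' (rep (i, ⟨0, hK0⟩))).v := by
    intro i n
    induction n with
    | zero => intro hn; rfl
    | succ m ih =>
      intro hn
      have hm : m < K := Nat.lt_of_succ_lt hn
      exact (rowstep i ⟨m, hm⟩ ⟨m + 1, hn⟩ rfl).symm.trans (ih hm)
  have cole0 : ∀ (p : Fin K) (n : ℕ) (hn : n < k),
      (h' (rep (⟨n, hn⟩, p))).e = (h' (rep (⟨0, hk0⟩, p))).e := by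
    intro p n
    induction n with
    | zero => intro hn; rfl
    | succ m ih =>
      intro hn
      have hm : m < k := Nat.lt_of_succ_lt hn
      exact (colstep p ⟨m, hm⟩ ⟨m + 1, hn⟩ rfl).symm.trans (ih hm)
  set W : Fin k → V := fun i => (h' (rep (i, ⟨0, hK0⟩))).v with hWdef
  set E : Fin K → Sym2 V := fun p => (h' (rep (⟨0, hk0⟩, p))).e with hEdef
  have hWval : ∀ (i : Fin k) (p : Fin K), ∀ a ∈ μ (i, p), (h' a).v = W i := by
    intro i p a ha
    exact (cellv (i, p) a ha).trans (rowv0 i p.1 p.2)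
  have hEval : ∀ (i : Fin k) (p : Fin K), ∀ a ∈ μ (i, p), (h' a).e = E p := by
    intro i p a ha
    exact (celle (i, p) a ha).trans (cole0 p i.1 i.2)
  have hWE : ∀ (i : Fin k) (p : Fin K),
      (W i ∈ E p ↔ i ∈ (ρ₂ p).1) ∧ E p ∈ G.edgeSet := by
    intro i p
    have ha := hrep (i, p)
    have h1 : (h' (rep (i, p))).v = W i := hWval i p _ ha
    have h2 : (h' (rep (i, p))).e = E p := hEval i p _ ha
    have h5 := hdet (rep (i, p)) _ ha
    have hi5 : (h' (rep (i, p))).i = i := congrArg Prod.fst h5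
    have hp5 : (h' (rep (i, p))).p = p := congrArg Prod.snd h5
    have h3 := (h' (rep (i, p))).hvi
    have h4 := (h' (rep (i, p))).he
    rw [h1, h2, hi5, hp5] at h3
    rw [h2] at h4
    exact ⟨h3, h4⟩
  by_cases hk2 : k = 2
  · -- any edge gives a clique of size 2
    subst hk2
    have key : ∀ z : Sym2 V, z ∈ G.edgeSet → HasNClique G 2 := by
      refine Sym2.ind ?_
      intro x y hz
      have hadjxy : G.Adj x y := hz
      refine ⟨{x, y}, ?_, ?_⟩
      · intro a ha b hb hab
        simp only [Finset.coe_insert, Finset.coe_singleton, Set.mem_insert_iff,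
          Set.mem_singleton_iff] at ha hb
        rcases ha with rfl | rfl <;> rcases hb with rfl | rfl
        · exact absurd rfl hab
        · exact hadjxy
        · exact hadjxy.symm
        · exact absurd rfl hab
      · simp [Finset.card_pair hadjxy.ne]
    exact key _ (hWE ⟨0, hk0⟩ ⟨0, hK0⟩).2
  · have hk3 : 3 ≤ k := by omega
    have hWinj : Function.Injective W := by
      intro i j hij
      by_contra hne
      obtain ⟨l, hl⟩ : ∃ l : Fin k, l ∉ ({i, j} : Finset (Fin k)) := by
        by_contra hall
        push_neg at hall
        have hsub : (Finset.univ : Finset (Fin k)) ⊆ {i, j} := fun x _ => hall x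
        have h1 := Finset.card_le_card hsub
        have h2 : ({i, j} : Finset (Fin k)).card ≤ 2 :=
          (Finset.card_insert_le _ _).trans (by simp)
        rw [Finset.card_univ, Fintype.card_fin] at h1
        omega
      simp only [Finset.mem_insert, Finset.mem_singleton, not_or] at hl
      have hil : i ≠ l := fun hh => hl.1 hh.symm
      have hcard : ({i, l} : Finset (Fin k)).card = 2 := Finset.card_pair hil
      set q := ρ₂.symm ⟨{i, l}, hcard⟩ with hqdef
      have hq : (ρ₂ q).1 = {i, l} := congrArg Subtype.val (ρ₂.apply_symm_apply _)
      have hiq : i ∈ (ρ₂ q).1 := by rw [hq]; simp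
      have hjq : j ∉ (ρ₂ q).1 := by
        rw [hq]
        simp only [Finset.mem_insert, Finset.mem_singleton, not_or]
        exact ⟨fun hh => hne hh.symm, fun hh => hl.2 hh.symm⟩
      have h1 := (hWE i q).1
      have h2 := (hWE j q).1
      rw [hij] at h1
      exact hjq (h2.mp (h1.mpr hiq))
    have hWadj : ∀ i j : Fin k, i ≠ j → G.Adj (W i) (W j) := by
      intro i j hij
      have hcard : ({i, j} : Finset (Fin k)).card = 2 := Finset.card_pair hij
      set q := ρ₂.symm ⟨{i, j}, hcard⟩ with hqdef
      have hq : (ρ₂ q).1 = {i, j} := congrArg Subtype.val (ρ₂.apply_symm_apply _)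
      have h1 : W i ∈ E q := (hWE i q).1.mpr (by rw [hq]; simp)
      have h2 : W j ∈ E q := (hWE j q).1.mpr (by rw [hq]; simp)
      have hWne : W i ≠ W j := fun hh => hij (hWinj hh)
      have heq := (Sym2.mem_and_mem_iff hWne).mp ⟨h1, h2⟩
      have hedge := (hWE i q).2
      rw [heq] at hedge
      exact hedge
    refine ⟨Finset.image W Finset.univ, ?_, ?_⟩
    · intro a ha b hb hab
      simp only [Finset.coe_image, Finset.coe_univ, Set.image_univ,
        Set.mem_range] at ha hb
      obtain ⟨i, rfl⟩ := ha
      obtain ⟨j, rfl⟩ := hb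
      exact hWadj i j (fun hh => hab (by rw [hh]))
    · rw [Finset.card_image_of_injective _ hWinj, Finset.card_univ, Fintype.card_fin]
end

section
/- Combinatorial content of the second Corollary to Theorem 4.6: Let A and B be finite σ-structures, let k, L ≥ 1, let ν be a grid-like mapping from A onto [k] × [k], and let g_1, …, g_L : A → B be injective homomorphisms such that for every homomorphism g : A → B there exist a homomorphism h : A → A and l ∈ [L] with g ∘ h = g_l. Then there exist mappings ρ_1, …, ρ_L : B → [k] × [k] such that for every homomorphism g : A → B there exist a homomorphism h : A → A and l ∈ [L] such that ρ_l ∘ g ∘ h is a grid-like mapping from A onto [k] × [k]. -/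
/-- Combinatorial content of the second Corollary to Theorem 4.6. -/
theorem second_corollary_combinatorial
    {σ : Type} {ar : σ → ℕ} {A B : Type} [Finite σ] [Finite A] [Finite B]
    (SA : RelStruct σ ar A) (SB : RelStruct σ ar B)
    (k L : ℕ) (hk : 1 ≤ k) (hL : 1 ≤ L)
    (ν : A → Fin k × Fin k) (hν : GridLike SA k ν)
    (g₀ : Fin L → A → B)
    (hg₀hom : ∀ l : Fin L, IsHom SA SB (g₀ l))
    (hg₀inj : ∀ l : Fin L, Function.Injective (g₀ l))
    (hfact : ∀ g : A → B, IsHom SA SB g →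
      ∃ h : A → A, IsHom SA SA h ∧ ∃ l : Fin L, g ∘ h = g₀ l) :
    ∃ ρ : Fin L → B → Fin k × Fin k,
      ∀ g : A → B, IsHom SA SB g →
        ∃ h : A → A, IsHom SA SA h ∧
          ∃ l : Fin L, GridLike SA k (fun a => ρ l (g (h a))) := by
  haveI : Nonempty A := by
    obtain ⟨a, -⟩ := hν.1 (⟨0, hk⟩, ⟨0, hk⟩)
    exact ⟨a⟩
  refine ⟨fun l b => ν (Function.invFun (g₀ l) b), fun g hg => ?_⟩
  obtain ⟨h, hh, l, hgl⟩ := hfact g hg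
  refine ⟨h, hh, l, ?_⟩
  have key : (fun a => ν (Function.invFun (g₀ l) (g (h a)))) = ν := by
    funext a
    have : g (h a) = g₀ l a := congrFun hgl a
    rw [this, Function.leftInverse_invFun (hg₀inj l)]
  rw [key]
  exact hν
end

section
/- Classification of injective homomorphisms between grid graphs (claim in the Example of Section 4): Let 1 ≤ k ≤ m and let g be an injective graph homomorphism from the (k × k)-grid with vertex set {0, 1, …, k−1}² to the (m × m)-grid with vertex set {0, 1, …, m−1}². Then there exist integers a, a' and signs s, s' ∈ {1, −1} such that either g(i,j) = (a + s·i, a' + s'·j) for all (i,j), or g(i,j) = (a + s·j, a' + s'·i) for all (i,j). -/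
lemma unit_iff' (x y : ℤ) (h : x.natAbs + y.natAbs = 1) :
    (x = 1 ∧ y = 0) ∨ (x = -1 ∧ y = 0) ∨ (x = 0 ∧ y = 1) ∨ (x = 0 ∧ y = -1) := by omega

/-- Square lemma: a 4-cycle in `ℤ²` (unit steps) with opposite corners distinct
closes up as a parallelogram. -/
lemma gridSq (a1 a2 b1 b2 c1 c2 d1 d2 : ℤ)
    (h1 : (b1 - a1).natAbs + (b2 - a2).natAbs = 1)
    (h2 : (d1 - b1).natAbs + (d2 - b2).natAbs = 1)
    (h3 : (d1 - c1).natAbs + (d2 - c2).natAbs = 1)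
    (h4 : (c1 - a1).natAbs + (c2 - a2).natAbs = 1)
    (h5 : d1 ≠ a1 ∨ d2 ≠ a2)
    (h6 : b1 ≠ c1 ∨ b2 ≠ c2) :
    d1 = b1 + c1 - a1 ∧ d2 = b2 + c2 - a2 := by
  rcases unit_iff' _ _ h1 with (⟨e1,f1⟩|⟨e1,f1⟩|⟨e1,f1⟩|⟨e1,f1⟩) <;>
  rcases unit_iff' _ _ h2 with (⟨e2,f2⟩|⟨e2,f2⟩|⟨e2,f2⟩|⟨e2,f2⟩) <;>
  rcases unit_iff' _ _ h3 with (⟨e3,f3⟩|⟨e3,f3⟩|⟨e3,f3⟩|⟨e3,f3⟩) <;>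
  rcases unit_iff' _ _ h4 with (⟨e4,f4⟩|⟨e4,f4⟩|⟨e4,f4⟩|⟨e4,f4⟩) <;>
  omega

/-- Two unit vectors both "perpendicular" to a third unit vector and not
opposite to each other are equal. -/
lemma gridStep (u1 v1 u2 v2 w1 w2 : ℤ)
    (h1 : u1.natAbs + v1.natAbs = 1)
    (h2 : u2.natAbs + v2.natAbs = 1)
    (h3 : w1.natAbs + w2.natAbs = 1)
    (h4 : u1 + u2 ≠ 0 ∨ v1 + v2 ≠ 0)
    (h5 : u1 ≠ w1 ∨ v1 ≠ w2)
    (h6 : u1 + w1 ≠ 0 ∨ v1 + w2 ≠ 0)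
    (h7 : u2 ≠ w1 ∨ v2 ≠ w2)
    (h8 : u2 + w1 ≠ 0 ∨ v2 + w2 ≠ 0) :
    u1 = u2 ∧ v1 = v2 := by
  rcases unit_iff' _ _ h1 with (⟨e1,f1⟩|⟨e1,f1⟩|⟨e1,f1⟩|⟨e1,f1⟩) <;>
  rcases unit_iff' _ _ h2 with (⟨e2,f2⟩|⟨e2,f2⟩|⟨e2,f2⟩|⟨e2,f2⟩) <;>
  rcases unit_iff' _ _ h3 with (⟨e3,f3⟩|⟨e3,f3⟩|⟨e3,f3⟩|⟨e3,f3⟩) <;>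
  omega

/-- Purely combinatorial core: an injective unit-step map from a `k × k`
grid of integers is affine. -/
lemma grid_affine (k : ℕ) (hk : 2 ≤ k) (X Y : ℕ → ℕ → ℤ)
    (hstep1 : ∀ i j, i + 1 < k → j < k →
      (X (i+1) j - X i j).natAbs + (Y (i+1) j - Y i j).natAbs = 1)
    (hstep2 : ∀ i j, i < k → j + 1 < k →
      (X i (j+1) - X i j).natAbs + (Y i (j+1) - Y i j).natAbs = 1)
    (hinj : ∀ i j i' j', i < k → j < k → i' < k → j' < k →
      X i j = X i' j' → Y i j = Y i' j' → i = i' ∧ j = j') :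
    ∀ i j, i < k → j < k →
      X i j = X 0 0 + (i : ℤ) * (X 1 0 - X 0 0) + (j : ℤ) * (X 0 1 - X 0 0) ∧
      Y i j = Y 0 0 + (i : ℤ) * (Y 1 0 - Y 0 0) + (j : ℤ) * (Y 0 1 - Y 0 0) := by
  have hne : ∀ i j i' j', i < k → j < k → i' < k → j' < k → (i ≠ i' ∨ j ≠ j') →
      X i j ≠ X i' j' ∨ Y i j ≠ Y i' j' := by
    intro i j i' j' h1 h2 h3 h4 h5
    by_contra hc
    push_neg at hc
    obtain ⟨e1, e2⟩ := hinj i j i' j' h1 h2 h3 h4 hc.1 hc.2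
    omega
  have hsq : ∀ i j, i + 1 < k → j + 1 < k →
      X (i+1) (j+1) = X (i+1) j + X i (j+1) - X i j ∧
      Y (i+1) (j+1) = Y (i+1) j + Y i (j+1) - Y i j := by
    intro i j hi hj
    exact gridSq _ _ _ _ _ _ _ _
      (hstep1 i j (by omega) (by omega))
      (hstep2 (i+1) j (by omega) hj)
      (hstep1 i (j+1) hi (by omega))
      (hstep2 i j (by omega) hj)
      (hne (i+1) (j+1) i j (by omega) (by omega) (by omega) (by omega) (by omega))
      (hne (i+1) j i (j+1) (by omega) (by omega) (by omega) (by omega) (by omega))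
  have hstepi : ∀ i, i + 2 < k →
      X (i+1+1) 0 - X (i+1) 0 = X (i+1) 0 - X i 0 ∧
      Y (i+1+1) 0 - Y (i+1) 0 = Y (i+1) 0 - Y i 0 := by
    intro i hi
    obtain ⟨e1, e2⟩ := hsq i 0 (by omega) (by omega)
    obtain ⟨e3, e4⟩ := hsq (i+1) 0 (by omega) (by omega)
    simp only [Nat.reduceAdd] at e1 e2 e3 e4
    have h4 := hne (i+1+1) 0 i 0 (by omega) (by omega) (by omega) (by omega) (by omega)
    have h5 := hne (i+1) 0 i 1 (by omega) (by omega) (by omega) (by omega) (by omega)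
    have h6 := hne (i+1) 1 i 0 (by omega) (by omega) (by omega) (by omega) (by omega)
    have h7 := hne (i+1+1) 0 (i+1) 1 (by omega) (by omega) (by omega) (by omega) (by omega)
    have h8 := hne (i+1+1) 1 (i+1) 0 (by omega) (by omega) (by omega) (by omega) (by omega)
    have := gridStep (X (i+1) 0 - X i 0) (Y (i+1) 0 - Y i 0)
      (X (i+1+1) 0 - X (i+1) 0) (Y (i+1+1) 0 - Y (i+1) 0)
      (X i 1 - X i 0) (Y i 1 - Y i 0)
      (hstep1 i 0 (by omega) (by omega))
      (hstep1 (i+1) 0 (by omega) (by omega))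
      (hstep2 i 0 (by omega) (by omega))
      (by omega) (by omega) (by omega) (by omega) (by omega)
    omega
  have hstepj : ∀ j, j + 2 < k →
      X 0 (j+1+1) - X 0 (j+1) = X 0 (j+1) - X 0 j ∧
      Y 0 (j+1+1) - Y 0 (j+1) = Y 0 (j+1) - Y 0 j := by
    intro j hj
    obtain ⟨e1, e2⟩ := hsq 0 j (by omega) (by omega)
    obtain ⟨e3, e4⟩ := hsq 0 (j+1) (by omega) (by omega)
    simp only [Nat.reduceAdd] at e1 e2 e3 e4
    have h4 := hne 0 (j+1+1) 0 j (by omega) (by omega) (by omega) (by omega) (by omega)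
    have h5 := hne 0 (j+1) 1 j (by omega) (by omega) (by omega) (by omega) (by omega)
    have h6 := hne 1 (j+1) 0 j (by omega) (by omega) (by omega) (by omega) (by omega)
    have h7 := hne 0 (j+1+1) 1 (j+1) (by omega) (by omega) (by omega) (by omega) (by omega)
    have h8 := hne 1 (j+1+1) 0 (j+1) (by omega) (by omega) (by omega) (by omega) (by omega)
    have := gridStep (X 0 (j+1) - X 0 j) (Y 0 (j+1) - Y 0 j)
      (X 0 (j+1+1) - X 0 (j+1)) (Y 0 (j+1+1) - Y 0 (j+1))
      (X 1 j - X 0 j) (Y 1 j - Y 0 j)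
      (hstep2 0 j (by omega) (by omega))
      (hstep2 0 (j+1) (by omega) (by omega))
      (hstep1 0 j (by omega) (by omega))
      (by omega) (by omega) (by omega) (by omega) (by omega)
    omega
  have hd1col : ∀ i, i + 1 < k →
      X (i+1) 0 - X i 0 = X 1 0 - X 0 0 ∧ Y (i+1) 0 - Y i 0 = Y 1 0 - Y 0 0 := by
    intro i
    induction i with
    | zero => intro _; exact ⟨rfl, rfl⟩
    | succ n ih =>
      intro h
      have h1 := hstepi n (by omega)
      have h2 := ih (by omega)
      omega
  have hd2col : ∀ j, j + 1 < k →
      X 0 (j+1) - X 0 j = X 0 1 - X 0 0 ∧ Y 0 (j+1) - Y 0 j = Y 0 1 - Y 0 0 := by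
    intro j
    induction j with
    | zero => intro _; exact ⟨rfl, rfl⟩
    | succ n ih =>
      intro h
      have h1 := hstepj n (by omega)
      have h2 := ih (by omega)
      omega
  have hd1 : ∀ j i, i + 1 < k → j < k →
      X (i+1) j - X i j = X 1 0 - X 0 0 ∧ Y (i+1) j - Y i j = Y 1 0 - Y 0 0 := by
    intro j
    induction j with
    | zero => intro i hi _; exact hd1col i hi
    | succ n ih =>
      intro i hi hj
      have h1 := hsq i n hi (by omega)
      have h2 := ih i hi (by omega)
      omega
  have hd2 : ∀ i j, i < k → j + 1 < k →
      X i (j+1) - X i j = X 0 1 - X 0 0 ∧ Y i (j+1) - Y i j = Y 0 1 - Y 0 0 := by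
    intro i
    induction i with
    | zero => intro j _ hj; exact hd2col j hj
    | succ n ih =>
      intro j hi hj
      have h1 := hsq n j (by omega) (by omega)
      have h2 := ih j (by omega) hj
      omega
  have hcol : ∀ j, j < k →
      X 0 j = X 0 0 + (j : ℤ) * (X 0 1 - X 0 0) ∧
      Y 0 j = Y 0 0 + (j : ℤ) * (Y 0 1 - Y 0 0) := by
    intro j
    induction j with
    | zero => intro _; constructor <;> push_cast <;> ring
    | succ n ih =>
      intro h
      obtain ⟨e1, e2⟩ := hd2 0 n (by omega) (by omega)
      obtain ⟨e3, e4⟩ := ih (by omega)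
      constructor <;> push_cast
      · linear_combination e1 + e3
      · linear_combination e2 + e4
  intro i
  induction i with
  | zero =>
    intro j _ hj
    obtain ⟨e1, e2⟩ := hcol j hj
    constructor <;> push_cast
    · linear_combination e1
    · linear_combination e2
  | succ n ih =>
    intro j hn hj
    obtain ⟨e1, e2⟩ := hd1 j n (by omega) hj
    obtain ⟨e3, e4⟩ := ih j (by omega) hj
    constructor <;> push_cast
    · linear_combination e1 + e3
    · linear_combination e2 + e4


/-- Classification of injective homomorphisms between grid graphs
(claim in the Example of Section 4). Vertices of the `(k × k)`-grid are `Fin k × Fin k`,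
representing `{0, …, k−1}²`. -/
theorem injective_grid_homomorphism_classification
    (k m : ℕ) (hk : 1 ≤ k) (hkm : k ≤ m)
    (g : Fin k × Fin k → Fin m × Fin m)
    (hinj : Function.Injective g)
    (hhom : ∀ p q : Fin k × Fin k, (gridGraph k k).Adj p q → (gridGraph m m).Adj (g p) (g q)) :
    ∃ a a' s s' : ℤ, (s = 1 ∨ s = -1) ∧ (s' = 1 ∨ s' = -1) ∧
      ((∀ i j : Fin k,
          ((g (i, j)).1 : ℤ) = a + s * (i : ℤ) ∧ ((g (i, j)).2 : ℤ) = a' + s' * (j : ℤ)) ∨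
       (∀ i j : Fin k,
          ((g (i, j)).1 : ℤ) = a + s * (j : ℤ) ∧ ((g (i, j)).2 : ℤ) = a' + s' * (i : ℤ))) := by
  rcases eq_or_lt_of_le hk with h1 | h2
  · -- k = 1
    subst h1
    refine ⟨((g (0, 0)).1 : ℤ), ((g (0, 0)).2 : ℤ), 1, 1, Or.inl rfl, Or.inl rfl, Or.inl ?_⟩
    intro i j
    have hi : i = 0 := Subsingleton.elim i 0
    have hj : j = 0 := Subsingleton.elim j 0
    subst hi; subst hj
    simp
  · -- k ≥ 2
    set X : ℕ → ℕ → ℤ := fun i j =>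
      if h : i < k ∧ j < k then ((g (⟨i, h.1⟩, ⟨j, h.2⟩)).1 : ℤ) else 0 with hX
    set Y : ℕ → ℕ → ℤ := fun i j =>
      if h : i < k ∧ j < k then ((g (⟨i, h.1⟩, ⟨j, h.2⟩)).2 : ℤ) else 0 with hY
    have hXval : ∀ (i j : ℕ) (hi : i < k) (hj : j < k),
        X i j = ((g (⟨i, hi⟩, ⟨j, hj⟩)).1 : ℤ) := by
      intro i j hi hj
      simp only [hX, dif_pos (And.intro hi hj)]
    have hYval : ∀ (i j : ℕ) (hi : i < k) (hj : j < k),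
        Y i j = ((g (⟨i, hi⟩, ⟨j, hj⟩)).2 : ℤ) := by
      intro i j hi hj
      simp only [hY, dif_pos (And.intro hi hj)]
    have hadj : ∀ (i j i' j' : ℕ) (hi : i < k) (hj : j < k) (hi' : i' < k) (hj' : j' < k),
        ((i : ℤ) - (i' : ℤ)).natAbs + ((j : ℤ) - (j' : ℤ)).natAbs = 1 →
        (X i j - X i' j').natAbs + (Y i j - Y i' j').natAbs = 1 := by
      intro i j i' j' hi hj hi' hj' hd
      have hadj' : (gridGraph k k).Adj (⟨i, hi⟩, ⟨j, hj⟩) (⟨i', hi'⟩, ⟨j', hj'⟩) := hd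
      have := hhom _ _ hadj'
      rw [hXval i j hi hj, hXval i' j' hi' hj', hYval i j hi hj, hYval i' j' hi' hj']
      exact this
    have hstep1 : ∀ i j, i + 1 < k → j < k →
        (X (i+1) j - X i j).natAbs + (Y (i+1) j - Y i j).natAbs = 1 := by
      intro i j hi hj
      refine hadj (i+1) j i j hi hj (by omega) hj ?_
      push_cast
      omega
    have hstep2 : ∀ i j, i < k → j + 1 < k →
        (X i (j+1) - X i j).natAbs + (Y i (j+1) - Y i j).natAbs = 1 := by
      intro i j hi hj
      refine hadj i (j+1) i j hi hj hi (by omega) ?_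
      push_cast
      omega
    have hinj' : ∀ i j i' j', i < k → j < k → i' < k → j' < k →
        X i j = X i' j' → Y i j = Y i' j' → i = i' ∧ j = j' := by
      intro i j i' j' hi hj hi' hj' e1 e2
      rw [hXval i j hi hj, hXval i' j' hi' hj'] at e1
      rw [hYval i j hi hj, hYval i' j' hi' hj'] at e2
      have hg : g (⟨i, hi⟩, ⟨j, hj⟩) = g (⟨i', hi'⟩, ⟨j', hj'⟩) := by
        apply Prod.ext
        · exact Fin.ext (by exact_mod_cast e1)
        · exact Fin.ext (by exact_mod_cast e2)
      have := hinj hg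
      rw [Prod.mk.injEq, Fin.mk.injEq, Fin.mk.injEq] at this
      exact this
    have haff := grid_affine k h2 X Y hstep1 hstep2 hinj'
    -- basic facts about the two step vectors
    have hu1 := hstep1 0 0 (by omega) (by omega)
    have hu2 := hstep2 0 0 (by omega) (by omega)
    simp only [Nat.reduceAdd] at hu1 hu2
    have hne1 : X 1 0 ≠ X 0 1 ∨ Y 1 0 ≠ Y 0 1 := by
      by_contra hc
      push_neg at hc
      have := hinj' 1 0 0 1 (by omega) (by omega) (by omega) (by omega) hc.1 hc.2
      omega
    have h11 := haff 1 1 (by omega) (by omega)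
    have hne2 : X 1 1 ≠ X 0 0 ∨ Y 1 1 ≠ Y 0 0 := by
      by_contra hc
      push_neg at hc
      have := hinj' 1 1 0 0 (by omega) (by omega) (by omega) (by omega) hc.1 hc.2
      omega
    have h11' : X 1 1 = X 1 0 + X 0 1 - X 0 0 ∧ Y 1 1 = Y 1 0 + Y 0 1 - Y 0 0 := by
      obtain ⟨e1, e2⟩ := h11
      constructor
      · linear_combination e1
      · linear_combination e2
    by_cases hc : X 1 0 - X 0 0 = 0
    · -- first step is vertical: transposed form
      have hD1y : Y 1 0 - Y 0 0 = 1 ∨ Y 1 0 - Y 0 0 = -1 := by omega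
      have hD2x : X 0 1 - X 0 0 = 1 ∨ X 0 1 - X 0 0 = -1 := by omega
      have hD2y : Y 0 1 - Y 0 0 = 0 := by omega
      refine ⟨X 0 0, Y 0 0, X 0 1 - X 0 0, Y 1 0 - Y 0 0, hD2x, hD1y, Or.inr ?_⟩
      intro i j
      have h := haff i j i.isLt j.isLt
      have e1 := hXval i j i.isLt j.isLt
      have e2 := hYval i j i.isLt j.isLt
      simp only [Fin.eta] at e1 e2
      constructor
      · rw [← e1]
        linear_combination h.1 + (i : ℤ) * hc
      · rw [← e2]
        linear_combination h.2 + (j : ℤ) * hD2y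
    · -- first step is horizontal: direct form
      have hD1y : Y 1 0 - Y 0 0 = 0 := by omega
      have hD1x : X 1 0 - X 0 0 = 1 ∨ X 1 0 - X 0 0 = -1 := by omega
      have hD2x : X 0 1 - X 0 0 = 0 := by omega
      have hD2y : Y 0 1 - Y 0 0 = 1 ∨ Y 0 1 - Y 0 0 = -1 := by omega
      refine ⟨X 0 0, Y 0 0, X 1 0 - X 0 0, Y 0 1 - Y 0 0, hD1x, hD2y, Or.inl ?_⟩
      intro i j
      have h := haff i j i.isLt j.isLt
      have e1 := hXval i j i.isLt j.isLt
      have e2 := hYval i j i.isLt j.isLt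
      simp only [Fin.eta] at e1 e2
      constructor
      · rw [← e1]
        linear_combination h.1 + (j : ℤ) * hD2x
      · rw [← e2]
        linear_combination h.2 + (i : ℤ) * hD1y
end

section
/- Grid-likeness of reduced injective grid homomorphisms (Example of Section 4): Let 1 ≤ k ≤ m and define ρ : {0,…,m−1}² → {0,…,k−1}² by ρ(i,j) = (i mod k, j mod k). Then for every injective graph homomorphism g from the (k × k)-grid to the (m × m)-grid, the composition ρ ∘ g is a grid-like mapping from the (k × k)-grid onto {0,…,k−1}², i.e. ρ ∘ g is surjective and, for each i ∈ {0,…,k−1}, the preimages of i under each of the two components of ρ ∘ g are connected subsets of the (k × k)-grid. -/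
lemma unit_step (a b : ℤ) (h : a.natAbs + b.natAbs = 1) :
    (a = 1 ∧ b = 0) ∨ (a = -1 ∧ b = 0) ∨ (a = 0 ∧ b = 1) ∨ (a = 0 ∧ b = -1) := by
  omega

lemma square_arith (a1 a2 b1 b2 c1 c2 d1 d2 : ℤ)
    (e1 : a1.natAbs + a2.natAbs = 1) (e2 : c1.natAbs + c2.natAbs = 1)
    (e3 : d1.natAbs + d2.natAbs = 1) (e4 : b1.natAbs + b2.natAbs = 1)
    (hs1 : a1 + b1 = d1 + c1) (hs2 : a2 + b2 = d2 + c2)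
    (ne1 : ¬(a1 + b1 = 0 ∧ a2 + b2 = 0)) (ne2 : ¬(a1 = d1 ∧ a2 = d2)) :
    c1 = a1 ∧ c2 = a2 ∧ d1 = b1 ∧ d2 = b2 ∧ ((a2 = 0 ∧ d1 = 0) ∨ (a1 = 0 ∧ d2 = 0)) := by
  rcases unit_step _ _ e1 with ⟨h1,h2⟩|⟨h1,h2⟩|⟨h1,h2⟩|⟨h1,h2⟩ <;>
  rcases unit_step _ _ e2 with ⟨h3,h4⟩|⟨h3,h4⟩|⟨h3,h4⟩|⟨h3,h4⟩ <;>
  rcases unit_step _ _ e3 with ⟨h5,h6⟩|⟨h5,h6⟩|⟨h5,h6⟩|⟨h5,h6⟩ <;>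
  rcases unit_step _ _ e4 with ⟨h7,h8⟩|⟨h7,h8⟩|⟨h7,h8⟩|⟨h7,h8⟩ <;>
  subst h1 h2 h3 h4 h5 h6 h7 h8 <;> omega

lemma grid_square (k : ℕ) (x y : ℕ → ℕ → ℤ)
    (hH : ∀ i j, i+1 < k → j < k →
      (x (i+1) j - x i j).natAbs + (y (i+1) j - y i j).natAbs = 1)
    (hV : ∀ i j, i < k → j+1 < k →
      (x i (j+1) - x i j).natAbs + (y i (j+1) - y i j).natAbs = 1)
    (hinj : ∀ i j i' j', i < k → j < k → i' < k → j' < k →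
      x i j = x i' j' → y i j = y i' j' → i = i' ∧ j = j')
    (i j : ℕ) (hi : i+1 < k) (hj : j+1 < k) :
    (x (i+1) (j+1) - x i (j+1) = x (i+1) j - x i j) ∧
    (y (i+1) (j+1) - y i (j+1) = y (i+1) j - y i j) ∧
    (x (i+1) (j+1) - x (i+1) j = x i (j+1) - x i j) ∧
    (y (i+1) (j+1) - y (i+1) j = y i (j+1) - y i j) ∧
    ((y (i+1) j - y i j = 0 ∧ x i (j+1) - x i j = 0) ∨
     (x (i+1) j - x i j = 0 ∧ y i (j+1) - y i j = 0)) := by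
  have e1 := hH i j hi (by omega)
  have e2 := hH i (j+1) hi hj
  have e3 := hV i j (by omega) hj
  have e4 := hV (i+1) j hi hj
  have ne1 : ¬ (x (i+1) (j+1) - x i j = 0 ∧ y (i+1) (j+1) - y i j = 0) := by
    rintro ⟨h1, h2⟩
    have := hinj i j (i+1) (j+1) (by omega) (by omega) hi hj (by linarith) (by linarith)
    omega
  have ne2 : ¬ (x (i+1) j = x i (j+1) ∧ y (i+1) j = y i (j+1)) := by
    rintro ⟨h1, h2⟩
    have := hinj (i+1) j i (j+1) hi (by omega) (by omega) hj h1 h2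
    omega
  have := square_arith (x (i+1) j - x i j) (y (i+1) j - y i j)
    (x (i+1) (j+1) - x (i+1) j) (y (i+1) (j+1) - y (i+1) j)
    (x (i+1) (j+1) - x i (j+1)) (y (i+1) (j+1) - y i (j+1))
    (x i (j+1) - x i j) (y i (j+1) - y i j)
    e1 e2 e3 e4 (by ring) (by ring) (by intro h; exact ne1 ⟨by linarith [h.1], by linarith [h.2]⟩)
    (by rintro ⟨h1, h2⟩; exact ne2 ⟨by linarith, by linarith⟩)
  tauto

lemma rigidAux (k : ℕ) (hk : 2 ≤ k) (x y : ℕ → ℕ → ℤ)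
    (hH : ∀ i j, i+1 < k → j < k →
      (x (i+1) j - x i j).natAbs + (y (i+1) j - y i j).natAbs = 1)
    (hV : ∀ i j, i < k → j+1 < k →
      (x i (j+1) - x i j).natAbs + (y i (j+1) - y i j).natAbs = 1)
    (hinj : ∀ i j i' j', i < k → j < k → i' < k → j' < k →
      x i j = x i' j' → y i j = y i' j' → i = i' ∧ j = j')
    (hor : y 1 0 - y 0 0 = 0) :
    ∃ ε δ : ℤ, (ε = 1 ∨ ε = -1) ∧ (δ = 1 ∨ δ = -1) ∧
      ∀ i j, i < k → j < k →
        x i j = x 0 0 + ε * i ∧ y i j = y 0 0 + δ * j := by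
  -- horizontal steps are independent of the row
  have hconst : ∀ j, j < k → ∀ i, i+1 < k →
      x (i+1) j - x i j = x (i+1) 0 - x i 0 ∧ y (i+1) j - y i j = y (i+1) 0 - y i 0 := by
    intro j
    induction j with
    | zero => intro _ i _; exact ⟨rfl, rfl⟩
    | succ j ih =>
      intro hj i hi
      have hs := grid_square k x y hH hV hinj i j hi hj
      have := ih (by omega) i hi
      omega
  -- vertical steps are independent of the column
  have vconst : ∀ i, i < k → ∀ j, j+1 < k →
      x i (j+1) - x i j = x 0 (j+1) - x 0 j ∧ y i (j+1) - y i j = y 0 (j+1) - y 0 j := by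
    intro i
    induction i with
    | zero => intro _ j _; exact ⟨rfl, rfl⟩
    | succ i ih =>
      intro hi j hj
      have hs := grid_square k x y hH hV hinj i j hi hj
      have := ih (by omega) j hj
      omega
  have h00 := hH 0 0 (by omega) (by omega)
  have v00 := hV 0 0 (by omega) (by omega)
  have sq00 := grid_square k x y hH hV hinj 0 0 (by omega) (by omega)
  -- the first vertical step is vertical
  have v01 : x 0 1 - x 0 0 = 0 := by
    simp only [Nat.reduceAdd] at sq00 h00 v00
    omega
  -- all horizontal steps are horizontal
  have hflat : ∀ i, i+1 < k → y (i+1) 0 - y i 0 = 0 := by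
    intro i hi
    by_cases h1 : i = 0
    · subst h1; exact hor
    have hs := grid_square k x y hH hV hinj i 0 hi (by omega)
    have hv := vconst i (by omega) 0 (by omega)
    have hv0 := hV i 0 (by omega) (by omega)
    simp only [Nat.reduceAdd] at *
    omega
  -- all vertical steps are vertical
  have vflat : ∀ j, j+1 < k → x 0 (j+1) - x 0 j = 0 := by
    intro j hj
    by_cases h1 : j = 0
    · subst h1; exact v01
    have hs := grid_square k x y hH hV hinj 0 j (by omega) hj
    have hh := hconst j (by omega) 0 (by omega)
    have hh0 := hH 0 j (by omega) (by omega)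
    simp only [Nat.reduceAdd] at *
    omega
  have heps : x 1 0 - x 0 0 = 1 ∨ x 1 0 - x 0 0 = -1 := by
    simp only [Nat.reduceAdd] at h00
    omega
  have hdel : y 0 1 - y 0 0 = 1 ∨ y 0 1 - y 0 0 = -1 := by
    simp only [Nat.reduceAdd] at v00
    omega
  refine ⟨x 1 0 - x 0 0, y 0 1 - y 0 0, heps, hdel, ?_⟩
  -- sign consistency of horizontal steps
  have hsign : ∀ i, i+1 < k → x (i+1) 0 - x i 0 = x 1 0 - x 0 0 := by
    intro i
    induction i with
    | zero => intro _; rfl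
    | succ i ih =>
      intro hi
      have h1 := ih (by omega)
      have h2 := hH (i+1) 0 hi (by omega)
      have f1 := hflat i (by omega)
      have f2 := hflat (i+1) hi
      have ne : ¬ (x (i+2) 0 = x i 0 ∧ y (i+2) 0 = y i 0) := by
        rintro ⟨e1, e2⟩
        have := hinj (i+2) 0 i 0 hi (by omega) (by omega) (by omega) e1 e2
        omega
      have hre : i+1+1 = i+2 := rfl
      rw [hre] at h2 f2 ⊢
      omega
  have vsign : ∀ j, j+1 < k → y 0 (j+1) - y 0 j = y 0 1 - y 0 0 := by
    intro j
    induction j with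
    | zero => intro _; rfl
    | succ j ih =>
      intro hj
      have h1 := ih (by omega)
      have h2 := hV 0 (j+1) (by omega) hj
      have f1 := vflat j (by omega)
      have f2 := vflat (j+1) hj
      have ne : ¬ (x 0 (j+2) = x 0 j ∧ y 0 (j+2) = y 0 j) := by
        rintro ⟨e1, e2⟩
        have := hinj 0 (j+2) 0 j (by omega) hj (by omega) (by omega) e1 e2
        omega
      have hre : j+1+1 = j+2 := rfl
      rw [hre] at h2 f2 ⊢
      omega
  -- values along the first column / row
  have xcol : ∀ i, i < k → x i 0 = x 0 0 + (x 1 0 - x 0 0) * i ∧ y i 0 = y 0 0 := by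
    intro i
    induction i with
    | zero => intro _; simp
    | succ i ih =>
      intro hi
      obtain ⟨hx1, hy1⟩ := ih (by omega)
      have h1 := hsign i hi
      have f1 := hflat i hi
      have hc : ((i+1 : ℕ) : ℤ) = (i : ℤ) + 1 := by push_cast; ring
      rw [hc]
      constructor
      · have : (x 1 0 - x 0 0) * ((i:ℤ) + 1) = (x 1 0 - x 0 0) * i + (x 1 0 - x 0 0) := by ring
        omega
      · omega
  have yrow : ∀ j, j < k → y 0 j = y 0 0 + (y 0 1 - y 0 0) * j ∧ x 0 j = x 0 0 := by
    intro j
    induction j with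
    | zero => intro _; simp
    | succ j ih =>
      intro hj
      obtain ⟨hy1, hx1⟩ := ih (by omega)
      have h1 := vsign j hj
      have f1 := vflat j hj
      have hc : ((j+1 : ℕ) : ℤ) = (j : ℤ) + 1 := by push_cast; ring
      rw [hc]
      constructor
      · have : (y 0 1 - y 0 0) * ((j:ℤ) + 1) = (y 0 1 - y 0 0) * j + (y 0 1 - y 0 0) := by ring
        omega
      · omega
  -- now fill in the whole grid, by induction on j
  intro i j hi hj
  induction j with
  | zero => exact ⟨(xcol i hi).1, by simpa using (xcol i hi).2⟩
  | succ j ih =>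
    obtain ⟨hx1, hy1⟩ := ih (by omega)
    have hvc := vconst i hi j hj
    have f1 := vflat j hj
    have h1 := vsign j hj
    have hc : ((j+1 : ℕ) : ℤ) = (j : ℤ) + 1 := by push_cast; ring
    rw [hc]
    constructor
    · omega
    · have : (y 0 1 - y 0 0) * ((j:ℤ) + 1) = (y 0 1 - y 0 0) * j + (y 0 1 - y 0 0) := by ring
      omega

lemma rigid (k : ℕ) (hk : 0 < k) (x y : ℕ → ℕ → ℤ)
    (hH : ∀ i j, i+1 < k → j < k →
      (x (i+1) j - x i j).natAbs + (y (i+1) j - y i j).natAbs = 1)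
    (hV : ∀ i j, i < k → j+1 < k →
      (x i (j+1) - x i j).natAbs + (y i (j+1) - y i j).natAbs = 1)
    (hinj : ∀ i j i' j', i < k → j < k → i' < k → j' < k →
      x i j = x i' j' → y i j = y i' j' → i = i' ∧ j = j') :
    ∃ ε δ : ℤ, (ε = 1 ∨ ε = -1) ∧ (δ = 1 ∨ δ = -1) ∧
      ((∀ i j, i < k → j < k → x i j = x 0 0 + ε * i ∧ y i j = y 0 0 + δ * j) ∨
       (∀ i j, i < k → j < k → x i j = x 0 0 + ε * j ∧ y i j = y 0 0 + δ * i)) := by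
  rcases eq_or_lt_of_le (show 1 ≤ k from hk) with h1 | h2
  · refine ⟨1, 1, Or.inl rfl, Or.inl rfl, Or.inl ?_⟩
    intro i j hi hj
    have hi0 : i = 0 := by omega
    have hj0 : j = 0 := by omega
    subst hi0; subst hj0
    simp
  · have hk2 : 2 ≤ k := h2
    have h00 := hH 0 0 (by omega) (by omega)
    by_cases hcase : y 1 0 - y 0 0 = 0
    · obtain ⟨ε, δ, hε, hδ, hf⟩ := rigidAux k hk2 x y hH hV hinj hcase
      exact ⟨ε, δ, hε, hδ, Or.inl hf⟩
    · have hor' : x 1 0 - x 0 0 = 0 := by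
        simp only [Nat.reduceAdd] at h00
        omega
      obtain ⟨ε, δ, hε, hδ, hf⟩ := rigidAux k hk2 y x
        (fun i j hi hj => by have := hH i j hi hj; omega)
        (fun i j hi hj => by have := hV i j hi hj; omega)
        (fun i j i' j' hi hj hi' hj' e1 e2 => hinj i j i' j' hi hj hi' hj' e2 e1)
        hor'
      exact ⟨δ, ε, hδ, hε, Or.inr (fun i j hi hj => ⟨(hf i j hi hj).2, (hf i j hi hj).1⟩)⟩

lemma mod_trick (k : ℕ) (hk : 0 < k) (a ε : ℤ) (hε : ε = 1 ∨ ε = -1) (c : ℕ) (hc : c < k) :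
    ∃ n : ℕ, n < k ∧ ∀ t s : ℕ, s < k → (t : ℤ) = a + ε * s → (t % k = c ↔ s = n) := by
  have hk' : (0 : ℤ) < k := by exact_mod_cast hk
  set X : ℤ := ε * ((c : ℤ) - a) with hX
  have h0 : 0 ≤ X % k := Int.emod_nonneg X (by omega)
  have h1 : X % k < k := Int.emod_lt_of_pos X hk'
  refine ⟨(X % k).toNat, by omega, ?_⟩
  have hn0 : ((X % k).toNat : ℤ) = X % k := Int.toNat_of_nonneg h0
  -- key congruence : a + ε * n0 ≡ c  [ZMOD k]
  have m1 : (X % k) ≡ X [ZMOD (k : ℤ)] := Int.emod_emod_of_dvd X dvd_rfl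
  have m2 : a + ε * (X % k) ≡ a + ε * X [ZMOD (k : ℤ)] := (m1.mul_left ε).add_left a
  have m3 : a + ε * X = (c : ℤ) := by rcases hε with rfl | rfl <;> (rw [hX]; ring)
  have P : a + ε * ((X % k).toNat : ℤ) ≡ (c : ℤ) [ZMOD (k : ℤ)] := by
    rw [hn0, ← m3]; exact m2
  intro t s hs ht
  constructor
  · intro h
    -- t ≡ c [ZMOD k]
    have ht1 : (t : ℤ) ≡ (c : ℤ) [ZMOD (k : ℤ)] := by
      show (t : ℤ) % k = (c : ℤ) % k
      have e1 : ((t % k : ℕ) : ℤ) = (t : ℤ) % k := by push_cast; ring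
      have e2 : ((c : ℕ) : ℤ) % k = (c : ℤ) := Int.emod_eq_of_lt (by positivity) (by exact_mod_cast hc)
      rw [← e1, e2, h]
    have hcong : (s : ℤ) ≡ ((X % k).toNat : ℤ) [ZMOD (k : ℤ)] := by
      have h2 : a + ε * (s : ℤ) ≡ a + ε * ((X % k).toNat : ℤ) [ZMOD (k : ℤ)] := by
        rw [← ht]; exact ht1.trans P.symm
      have h3 : ε * (s : ℤ) ≡ ε * ((X % k).toNat : ℤ) [ZMOD (k : ℤ)] :=
        Int.ModEq.add_left_cancel (Int.ModEq.refl a) h2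
      have h4 : ε * (ε * (s : ℤ)) ≡ ε * (ε * ((X % k).toNat : ℤ)) [ZMOD (k : ℤ)] := h3.mul_left ε
      have h5 : ε * (ε * (s : ℤ)) = (s : ℤ) := by rcases hε with rfl | rfl <;> ring
      have h6 : ε * (ε * ((X % k).toNat : ℤ)) = ((X % k).toNat : ℤ) := by
        rcases hε with rfl | rfl <;> ring
      rwa [h5, h6] at h4
    have hd : (k : ℤ) ∣ ((X % k).toNat : ℤ) - (s : ℤ) := Int.ModEq.dvd hcong
    have := Int.eq_zero_of_abs_lt_dvd hd (by
      rw [abs_lt]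
      constructor <;> [skip; skip] <;> omega)
    omega
  · rintro rfl
    have ht2 : (t : ℤ) % k = (c : ℤ) % k := by rw [ht]; exact P
    have e1 : ((t % k : ℕ) : ℤ) = (t : ℤ) % k := by push_cast; ring
    have e2 : ((c : ℕ) : ℤ) % k = (c : ℤ) := Int.emod_eq_of_lt (by positivity) (by exact_mod_cast hc)
    have : ((t % k : ℕ) : ℤ) = (c : ℤ) := by rw [e1, ht2, e2]
    exact_mod_cast this

lemma col_connected (k : ℕ) (hk : 0 < k) (i0 : Fin k)
    (S : Set (Fin k × Fin k)) (hS : S = {p : Fin k × Fin k | p.1 = i0}) :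
    ((gridGraph k k).induce S).Connected := by
  subst hS
  rw [SimpleGraph.connected_iff]
  have base : ((i0, (⟨0, hk⟩ : Fin k)) : Fin k × Fin k) ∈ {p : Fin k × Fin k | p.1 = i0} := rfl
  refine ⟨?_, ⟨⟨_, base⟩⟩⟩
  have key : ∀ n (hn : n < k),
      ((gridGraph k k).induce {p : Fin k × Fin k | p.1 = i0}).Reachable
        ⟨(i0, ⟨0, hk⟩), base⟩ ⟨(i0, ⟨n, hn⟩), rfl⟩ := by
    intro n
    induction n with
    | zero => intro hn; rfl
    | succ n ih =>
      intro hn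
      refine (ih (by omega)).trans (SimpleGraph.Adj.reachable ?_)
      show (gridGraph k k).Adj (i0, ⟨n, by omega⟩) (i0, ⟨n+1, hn⟩)
      show (((i0 : ℤ)) - (i0 : ℤ)).natAbs + (((n : ℤ)) - ((n+1 : ℕ) : ℤ)).natAbs = 1
      push_cast
      omega
  have reach : ∀ v : {p : Fin k × Fin k // p ∈ {p : Fin k × Fin k | p.1 = i0}},
      ((gridGraph k k).induce {p : Fin k × Fin k | p.1 = i0}).Reachable ⟨(i0, ⟨0, hk⟩), base⟩ v := by
    rintro ⟨⟨a1, ⟨n, hn⟩⟩, rfl⟩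
    exact key n hn
  intro a b
  exact (reach a).symm.trans (reach b)

lemma row_connected (k : ℕ) (hk : 0 < k) (j0 : Fin k)
    (S : Set (Fin k × Fin k)) (hS : S = {p : Fin k × Fin k | p.2 = j0}) :
    ((gridGraph k k).induce S).Connected := by
  subst hS
  rw [SimpleGraph.connected_iff]
  have base : (((⟨0, hk⟩ : Fin k), j0) : Fin k × Fin k) ∈ {p : Fin k × Fin k | p.2 = j0} := rfl
  refine ⟨?_, ⟨⟨_, base⟩⟩⟩
  have key : ∀ n (hn : n < k),
      ((gridGraph k k).induce {p : Fin k × Fin k | p.2 = j0}).Reachable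
        ⟨(⟨0, hk⟩, j0), base⟩ ⟨(⟨n, hn⟩, j0), rfl⟩ := by
    intro n
    induction n with
    | zero => intro hn; rfl
    | succ n ih =>
      intro hn
      refine (ih (by omega)).trans (SimpleGraph.Adj.reachable ?_)
      show (gridGraph k k).Adj (⟨n, by omega⟩, j0) (⟨n+1, hn⟩, j0)
      show (((n : ℤ)) - ((n+1 : ℕ) : ℤ)).natAbs + (((j0 : ℤ)) - (j0 : ℤ)).natAbs = 1
      push_cast
      omega
  have reach : ∀ v : {p : Fin k × Fin k // p ∈ {p : Fin k × Fin k | p.2 = j0}},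
      ((gridGraph k k).induce {p : Fin k × Fin k | p.2 = j0}).Reachable ⟨(⟨0, hk⟩, j0), base⟩ v := by
    rintro ⟨⟨⟨n, hn⟩, a2⟩, rfl⟩
    exact key n hn
  intro a b
  exact (reach a).symm.trans (reach b)

/-- Grid-likeness of reduced injective grid homomorphisms (Example of
Section 4). Here `ρ(i, j) = (i mod k, j mod k)` is given by the hypothesis `hρ`. -/
theorem reduced_injective_grid_hom_is_gridlike
    (k m : ℕ) (hk : 0 < k) (hkm : k ≤ m)
    (ρ : Fin m × Fin m → Fin k × Fin k)
    (hρ : ∀ p : Fin m × Fin m,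
      ρ p = (⟨(p.1 : ℕ) % k, Nat.mod_lt _ hk⟩, ⟨(p.2 : ℕ) % k, Nat.mod_lt _ hk⟩))
    (g : Fin k × Fin k → Fin m × Fin m)
    (hinj : Function.Injective g)
    (hhom : ∀ p q : Fin k × Fin k, (gridGraph k k).Adj p q → (gridGraph m m).Adj (g p) (g q)) :
    GridLikeOn (gridGraph k k) k (fun p => ρ (g p)) := by
  classical
  set x : ℕ → ℕ → ℤ := fun i j =>
    if h : i < k ∧ j < k then (((g (⟨i, h.1⟩, ⟨j, h.2⟩)).1 : ℕ) : ℤ) else 0 with hxdef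
  set y : ℕ → ℕ → ℤ := fun i j =>
    if h : i < k ∧ j < k then (((g (⟨i, h.1⟩, ⟨j, h.2⟩)).2 : ℕ) : ℤ) else 0 with hydef
  have hx : ∀ (i j : ℕ) (h : i < k ∧ j < k),
      x i j = (((g (⟨i, h.1⟩, ⟨j, h.2⟩)).1 : ℕ) : ℤ) := by
    intro i j h
    simp only [hxdef]
    rw [dif_pos h]
  have hy : ∀ (i j : ℕ) (h : i < k ∧ j < k),
      y i j = (((g (⟨i, h.1⟩, ⟨j, h.2⟩)).2 : ℕ) : ℤ) := by
    intro i j h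
    simp only [hydef]
    rw [dif_pos h]
  have hH : ∀ i j, i+1 < k → j < k →
      (x (i+1) j - x i j).natAbs + (y (i+1) j - y i j).natAbs = 1 := by
    intro i j hi hj
    have h1 : i < k := by omega
    have adj : (gridGraph k k).Adj (⟨i, h1⟩, ⟨j, hj⟩) (⟨i+1, hi⟩, ⟨j, hj⟩) := by
      show (((i : ℕ) : ℤ) - ((i+1 : ℕ) : ℤ)).natAbs + (((j : ℕ) : ℤ) - ((j : ℕ) : ℤ)).natAbs = 1
      push_cast
      omega
    have h2 : ((((g (⟨i, h1⟩, ⟨j, hj⟩)).1 : ℕ) : ℤ) - (((g (⟨i+1, hi⟩, ⟨j, hj⟩)).1 : ℕ) : ℤ)).natAbs +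
        ((((g (⟨i, h1⟩, ⟨j, hj⟩)).2 : ℕ) : ℤ) - (((g (⟨i+1, hi⟩, ⟨j, hj⟩)).2 : ℕ) : ℤ)).natAbs
        = 1 := hhom _ _ adj
    rw [hx (i+1) j ⟨hi, hj⟩, hx i j ⟨h1, hj⟩, hy (i+1) j ⟨hi, hj⟩, hy i j ⟨h1, hj⟩]
    omega
  have hV : ∀ i j, i < k → j+1 < k →
      (x i (j+1) - x i j).natAbs + (y i (j+1) - y i j).natAbs = 1 := by
    intro i j hi hj
    have h1 : j < k := by omega
    have adj : (gridGraph k k).Adj (⟨i, hi⟩, ⟨j, h1⟩) (⟨i, hi⟩, ⟨j+1, hj⟩) := by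
      show (((i : ℕ) : ℤ) - ((i : ℕ) : ℤ)).natAbs + (((j : ℕ) : ℤ) - ((j+1 : ℕ) : ℤ)).natAbs = 1
      push_cast
      omega
    have h2 : ((((g (⟨i, hi⟩, ⟨j, h1⟩)).1 : ℕ) : ℤ) - (((g (⟨i, hi⟩, ⟨j+1, hj⟩)).1 : ℕ) : ℤ)).natAbs +
        ((((g (⟨i, hi⟩, ⟨j, h1⟩)).2 : ℕ) : ℤ) - (((g (⟨i, hi⟩, ⟨j+1, hj⟩)).2 : ℕ) : ℤ)).natAbs
        = 1 := hhom _ _ adj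
    rw [hx i (j+1) ⟨hi, hj⟩, hx i j ⟨hi, h1⟩, hy i (j+1) ⟨hi, hj⟩, hy i j ⟨hi, h1⟩]
    omega
  have hinjN : ∀ i j i' j', i < k → j < k → i' < k → j' < k →
      x i j = x i' j' → y i j = y i' j' → i = i' ∧ j = j' := by
    intro i j i' j' hi hj hi' hj' e1 e2
    rw [hx i j ⟨hi, hj⟩, hx i' j' ⟨hi', hj'⟩] at e1
    rw [hy i j ⟨hi, hj⟩, hy i' j' ⟨hi', hj'⟩] at e2
    have heq : ((⟨i, hi⟩, ⟨j, hj⟩) : Fin k × Fin k) = (⟨i', hi'⟩, ⟨j', hj'⟩) := by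
      apply hinj
      apply Prod.ext
      · exact Fin.ext (by exact_mod_cast e1)
      · exact Fin.ext (by exact_mod_cast e2)
    simp only [Prod.ext_iff, Fin.ext_iff] at heq
    exact heq
  obtain ⟨ε, δ, hε, hδ, hf | hf⟩ := rigid k hk x y hH hV hinjN
  · -- axis-aligned case
    have hgx : ∀ p : Fin k × Fin k, (((g p).1 : ℕ) : ℤ) = x 0 0 + ε * (p.1 : ℕ) := by
      intro p
      have h1 := (hf (p.1 : ℕ) (p.2 : ℕ) p.1.isLt p.2.isLt).1
      rw [hx _ _ ⟨p.1.isLt, p.2.isLt⟩] at h1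
      exact h1
    have hgy : ∀ p : Fin k × Fin k, (((g p).2 : ℕ) : ℤ) = y 0 0 + δ * (p.2 : ℕ) := by
      intro p
      have h1 := (hf (p.1 : ℕ) (p.2 : ℕ) p.1.isLt p.2.isLt).2
      rw [hy _ _ ⟨p.1.isLt, p.2.isLt⟩] at h1
      exact h1
    constructor
    · rintro ⟨c1, c2⟩
      obtain ⟨n1, hn1, hQ1⟩ := mod_trick k hk (x 0 0) ε hε (c1 : ℕ) c1.isLt
      obtain ⟨n2, hn2, hQ2⟩ := mod_trick k hk (y 0 0) δ hδ (c2 : ℕ) c2.isLt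
      refine ⟨(⟨n1, hn1⟩, ⟨n2, hn2⟩), ?_⟩
      simp only [hρ]
      apply Prod.ext
      · exact Fin.ext ((hQ1 _ n1 hn1 (hgx (⟨n1, hn1⟩, ⟨n2, hn2⟩))).2 rfl)
      · exact Fin.ext ((hQ2 _ n2 hn2 (hgy (⟨n1, hn1⟩, ⟨n2, hn2⟩))).2 rfl)
    · intro c
      constructor
      · obtain ⟨n, hn, hQ⟩ := mod_trick k hk (x 0 0) ε hε (c : ℕ) c.isLt
        refine col_connected k hk ⟨n, hn⟩ _ ?_
        ext p
        simp only [Set.mem_setOf_eq, hρ (g p)]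
        rw [Fin.ext_iff, Fin.ext_iff]
        exact hQ ((g p).1 : ℕ) (p.1 : ℕ) p.1.isLt (hgx p)
      · obtain ⟨n, hn, hQ⟩ := mod_trick k hk (y 0 0) δ hδ (c : ℕ) c.isLt
        refine row_connected k hk ⟨n, hn⟩ _ ?_
        ext p
        simp only [Set.mem_setOf_eq, hρ (g p)]
        rw [Fin.ext_iff, Fin.ext_iff]
        exact hQ ((g p).2 : ℕ) (p.2 : ℕ) p.2.isLt (hgy p)
  · -- swapped case
    have hgx : ∀ p : Fin k × Fin k, (((g p).1 : ℕ) : ℤ) = x 0 0 + ε * (p.2 : ℕ) := by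
      intro p
      have h1 := (hf (p.1 : ℕ) (p.2 : ℕ) p.1.isLt p.2.isLt).1
      rw [hx _ _ ⟨p.1.isLt, p.2.isLt⟩] at h1
      exact h1
    have hgy : ∀ p : Fin k × Fin k, (((g p).2 : ℕ) : ℤ) = y 0 0 + δ * (p.1 : ℕ) := by
      intro p
      have h1 := (hf (p.1 : ℕ) (p.2 : ℕ) p.1.isLt p.2.isLt).2
      rw [hy _ _ ⟨p.1.isLt, p.2.isLt⟩] at h1
      exact h1
    constructor
    · rintro ⟨c1, c2⟩
      obtain ⟨n1, hn1, hQ1⟩ := mod_trick k hk (x 0 0) ε hε (c1 : ℕ) c1.isLt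
      obtain ⟨n2, hn2, hQ2⟩ := mod_trick k hk (y 0 0) δ hδ (c2 : ℕ) c2.isLt
      refine ⟨(⟨n2, hn2⟩, ⟨n1, hn1⟩), ?_⟩
      simp only [hρ]
      apply Prod.ext
      · exact Fin.ext ((hQ1 _ n1 hn1 (hgx (⟨n2, hn2⟩, ⟨n1, hn1⟩))).2 rfl)
      · exact Fin.ext ((hQ2 _ n2 hn2 (hgy (⟨n2, hn2⟩, ⟨n1, hn1⟩))).2 rfl)
    · intro c
      constructor
      · obtain ⟨n, hn, hQ⟩ := mod_trick k hk (x 0 0) ε hε (c : ℕ) c.isLt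
        refine row_connected k hk ⟨n, hn⟩ _ ?_
        ext p
        simp only [Set.mem_setOf_eq, hρ (g p)]
        rw [Fin.ext_iff, Fin.ext_iff]
        exact hQ ((g p).1 : ℕ) (p.2 : ℕ) p.2.isLt (hgx p)
      · obtain ⟨n, hn, hQ⟩ := mod_trick k hk (y 0 0) δ hδ (c : ℕ) c.isLt
        refine col_connected k hk ⟨n, hn⟩ _ ?_
        ext p
        simp only [Set.mem_setOf_eq, hρ (g p)]
        rw [Fin.ext_iff, Fin.ext_iff]
        exact hQ ((g p).2 : ℕ) (p.1 : ℕ) p.1.isLt (hgy p)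
end
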